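/- Let σ = (√5 − 1)/2 and define S_n = σ^(n−3)·((n+1)σ + 3). Then S_7 > 1 and S_8 < 1. -/

import Mathlib

noncomputable def σ : ℝ := (Real.sqrt 5 - 1) / 2

noncomputable def S (n : ℕ) : ℝ := σ ^ ((n : ℤ) - 3) * (((n : ℝ) + 1) * σ + 3)

theorem stmt_12 : S 7 > 1 ∧ S 8 < 1 := by
  have h5 : Real.sqrt 5 ^ 2 = 5 := Real.sq_sqrt (by norm_num)
  have hnn := Real.sqrt_nonneg 5
  have h1 : Real.sqrt 5 > 2.236 := by nlinarith
  have h2 : Real.sqrt 5 < 2.2361 := by nlinarith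
  have hs : σ ^ 2 = 1 - σ := by simp only [σ]; nlinarith
  have e7 : S 7 = σ ^ (4:ℕ) * (8 * σ + 3) := by
    simp only [S]; norm_num
  have e8 : S 8 = σ ^ (5:ℕ) * (9 * σ + 3) := by
    simp only [S]; norm_num
  have v7 : S 7 = 31 * σ - 18 := by
    rw [e7]; linear_combination (8 * σ ^ 3 - 5 * σ ^ 2 + 13 * σ - 18) * hs
  have v8 : S 8 = 36 - 57 * σ := by
    rw [e8]; linear_combination (9 * σ ^ 4 - 6 * σ ^ 3 + 15 * σ ^ 2 - 21 * σ + 36) * hs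
  have hσ1 : σ > 0.618 := by simp only [σ]; nlinarith
  have hσ2 : σ < 0.61805 := by simp only [σ]; nlinarith
  constructor
  · rw [v7]; linarith
  · rw [v8]; linarith
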